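/- (Corollary 1) Let G = (V,E) be a finite undirected simple graph, L ⊆ V nonempty with follower set F = V \ L, and r a positive integer. Then the bootstrap percolation process with threshold r and initial active set L activates every follower (i.e., F ⊆ A_{|F|}) if and only if G is strongly r-robust with respect to L. -/

import Mathlib

/-- Bootstrap percolation: active sets `A_0 = L`,
`A_{k+1} = A_k ∪ { j : |N(j) ∩ A_k| ≥ r }`. -/
def bpActive {V : Type*} [Fintype V] [DecidableEq V] (G : SimpleGraph V)
    [DecidableRel G.Adj] (L : Finset V) (r : ℕ) : ℕ → Finset V
  | 0 => L
  | k + 1 =>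
      bpActive G L r k ∪
        Finset.univ.filter (fun j => r ≤ ((G.neighborFinset j) ∩ bpActive G L r k).card)

/-- `G` is strongly `r`-robust with respect to `L` if every nonempty subset `S ⊆ V \ L`
is `r`-reachable, i.e. some `i ∈ S` has at least `r` neighbors outside of `S`. -/
def StronglyRRobust {V : Type*} [Fintype V] [DecidableEq V] (G : SimpleGraph V)
    [DecidableRel G.Adj] (L : Finset V) (r : ℕ) : Prop :=
  ∀ S : Finset V, S ⊆ Lᶜ → S.Nonempty → ∃ i ∈ S, r ≤ (G.neighborFinset i \ S).card

lemma bp_mono {V : Type*} [Fintype V] [DecidableEq V] (G : SimpleGraph V)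
    [DecidableRel G.Adj] (L : Finset V) (r : ℕ) (k : ℕ) :
    bpActive G L r k ⊆ bpActive G L r (k + 1) := by
  simp only [bpActive]
  exact Finset.subset_union_left

lemma bp_L_sub {V : Type*} [Fintype V] [DecidableEq V] (G : SimpleGraph V)
    [DecidableRel G.Adj] (L : Finset V) (r : ℕ) (k : ℕ) :
    L ⊆ bpActive G L r k := by
  induction k with
  | zero => simp [bpActive]
  | succ n ih => exact ih.trans (bp_mono G L r n)

theorem stmt_8 {V : Type*} [Fintype V] [DecidableEq V] (G : SimpleGraph V)
    [DecidableRel G.Adj] (L : Finset V) (hL : L.Nonempty) (r : ℕ) (hr : 0 < r) :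
    (Lᶜ : Finset V) ⊆ bpActive G L r (Lᶜ : Finset V).card ↔ StronglyRRobust G L r := by
  constructor
  · -- BP succeeds → robust
    intro hbp S hS hSne
    by_contra hcon
    push_neg at hcon
    -- by induction, A_k disjoint from S
    have key : ∀ k, bpActive G L r k ⊆ Sᶜ := by
      intro k
      induction k with
      | zero =>
        intro x hx
        simp only [Finset.mem_compl]
        intro hxS
        exact absurd (hS hxS) (by simpa [bpActive] using hx)
      | succ n ih =>
        intro x hx
        simp only [bpActive, Finset.mem_union, Finset.mem_filter] at hx
        rcases hx with hx | ⟨-, hx⟩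
        · exact ih hx
        · simp only [Finset.mem_compl]
          intro hxS
          have hsub : G.neighborFinset x ∩ bpActive G L r n ⊆ G.neighborFinset x \ S := by
            intro y hy
            simp only [Finset.mem_inter] at hy
            simp only [Finset.mem_sdiff]
            exact ⟨hy.1, by simpa using ih hy.2⟩
          have := (hx.trans (Finset.card_le_card hsub))
          exact absurd this (not_le.mpr (hcon x hxS))
    obtain ⟨i, hi⟩ := hSne
    have : i ∈ Sᶜ := key _ (hbp (hS hi))
    simp only [Finset.mem_compl] at this
    exact this hi
  · -- robust → BP succeeds
    intro hrob
    have key : ∀ k, bpActive G L r k = Finset.univ ∨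
        k ≤ (bpActive G L r k \ L).card := by
      intro k
      induction k with
      | zero => right; exact Nat.zero_le _
      | succ n ih =>
        by_cases hu : bpActive G L r n = Finset.univ
        · left
          have := bp_mono G L r n
          rw [hu] at this
          exact Finset.univ_subset_iff.mp this
        · right
          have hne : (bpActive G L r n)ᶜ.Nonempty := by
            rw [Finset.nonempty_iff_ne_empty]
            intro h
            exact hu (by simpa using congrArg compl h)
          have hsubL : (bpActive G L r n)ᶜ ⊆ Lᶜ :=
            Finset.compl_subset_compl.mpr (bp_L_sub G L r n)
          obtain ⟨i, hiS, hir⟩ := hrob _ hsubL hne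
          have hiA : i ∉ bpActive G L r n := by simpa using hiS
          have hinew : i ∈ bpActive G L r (n + 1) := by
            simp only [bpActive, Finset.mem_union, Finset.mem_filter, Finset.mem_univ,
              true_and]
            right
            have : G.neighborFinset i \ (bpActive G L r n)ᶜ =
                G.neighborFinset i ∩ bpActive G L r n := by
              ext y; simp [Finset.mem_sdiff, Finset.mem_inter]
            rwa [this] at hir
          have hiL : i ∉ L := fun h => hiA (bp_L_sub G L r n h)
          have hins : insert i (bpActive G L r n \ L) ⊆ bpActive G L r (n + 1) \ L := by
            intro x hx
            rcases Finset.mem_insert.mp hx with rfl | hx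
            · exact Finset.mem_sdiff.mpr ⟨hinew, hiL⟩
            · rcases Finset.mem_sdiff.mp hx with ⟨h1, h2⟩
              exact Finset.mem_sdiff.mpr ⟨bp_mono G L r n h1, h2⟩
          have hcard : (bpActive G L r n \ L).card + 1 ≤
              (bpActive G L r (n + 1) \ L).card := by
            have := Finset.card_le_card hins
            rwa [Finset.card_insert_of_notMem (fun h => hiA (Finset.mem_sdiff.mp h).1)]
              at this
          rcases ih with h | h
          · exact absurd h hu
          · omega
    rcases key (Lᶜ : Finset V).card with h | h
    · rw [h]; exact Finset.subset_univ _
    · have hsub : bpActive G L r (Lᶜ : Finset V).card \ L ⊆ Lᶜ := by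
        intro x hx
        simp only [Finset.mem_sdiff] at hx
        simpa using hx.2
      have : bpActive G L r (Lᶜ : Finset V).card \ L = Lᶜ :=
        Finset.eq_of_subset_of_card_le hsub h
      intro x hx
      rw [← this] at hx
      exact (Finset.mem_sdiff.mp hx).1
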